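/- Let (R,*) be an l-maximal ring with involution (every left maximal ideal is two-sided) having a unique maximal two-sided ideal 𝔰 stable under * (i.e., 𝔰* = 𝔰). Then R has at most two maximal ideals, namely some 𝔪 and 𝔪*, and 𝔰 = 𝔪 ∩ 𝔪*. -/
import Mathlib

section Aux

variable {R : Type*} [Ring R] [StarRing R]

/-- The star of a two-sided ideal, as a left ideal. -/
def starIdeal' (I : Ideal R) (hI : ∀ x ∈ I, ∀ r : R, x * r ∈ I) : Ideal R where
  carrier := {x | star x ∈ I}
  add_mem' := by
    intro a b ha hb
    simp only [Set.mem_setOf_eq, star_add]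
    exact I.add_mem ha hb
  zero_mem' := by simp
  smul_mem' := by
    intro r x hx
    simp only [Set.mem_setOf_eq, smul_eq_mul, star_mul]
    exact hI _ hx (star r)

lemma mem_starIdeal' {I : Ideal R} {hI : ∀ x ∈ I, ∀ r : R, x * r ∈ I} {x : R} :
    x ∈ starIdeal' I hI ↔ star x ∈ I := Iff.rfl

/-- Primality of maximal two-sided ideals. -/
lemma key_prime (hlmax : ∀ I : Ideal R, I.IsMaximal → ∀ x ∈ I, ∀ r : R, x * r ∈ I)
    (N : Ideal R) (hN : N.IsMaximal) (A B : Ideal R)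
    (hAB : ∀ a ∈ A, ∀ b ∈ B, a * b ∈ N) : A ≤ N ∨ B ≤ N := by
  by_cases hA : A ≤ N
  · exact Or.inl hA
  · right
    obtain ⟨a, haA, haN⟩ := SetLike.not_le_iff_exists.mp hA
    have hne : N ≠ N ⊔ Ideal.span {a} := by
      intro h
      exact haN (h ▸ (le_sup_right (a := N)) (Ideal.subset_span rfl))
    have htop : N ⊔ Ideal.span {a} = ⊤ :=
      hN.1.2 _ (lt_of_le_of_ne le_sup_left hne)
    have h1 : (1 : R) ∈ N ⊔ Ideal.span {a} := htop ▸ Submodule.mem_top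
    obtain ⟨y, hy, z, hz, hyz⟩ := Submodule.mem_sup.mp h1
    obtain ⟨r, hr⟩ := Submodule.mem_span_singleton.mp hz
    intro b hb
    have hb' : b = y * b + r * (a * b) := by
      have h0 : y + r * a = 1 := by rw [← hyz, ← hr, smul_eq_mul]
      calc b = (y + r * a) * b := by rw [h0, one_mul]
        _ = y * b + r * (a * b) := by rw [add_mul, mul_assoc]
    rw [hb']
    exact N.add_mem (hlmax N hN y hy b) (N.smul_mem r (hAB a haA b hb))

lemma starIdeal'_isMaximal (hlmax : ∀ I : Ideal R, I.IsMaximal → ∀ x ∈ I, ∀ r : R, x * r ∈ I)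
    (M : Ideal R) (hM : M.IsMaximal) :
    (starIdeal' M (hlmax M hM)).IsMaximal := by
  rw [Ideal.isMaximal_def]
  constructor
  · intro h
    apply hM.ne_top
    rw [Ideal.eq_top_iff_one]
    have h1 : (1 : R) ∈ starIdeal' M (hlmax M hM) := h ▸ Submodule.mem_top
    simpa [mem_starIdeal'] using h1
  · intro J hJ
    by_contra hJtop
    obtain ⟨N, hNmax, hJN⟩ := Ideal.exists_le_maximal J hJtop
    have hMN : M ≤ starIdeal' N (hlmax N hNmax) := by
      intro x hx
      rw [mem_starIdeal']
      exact hJN (le_of_lt hJ (by rw [mem_starIdeal']; simpa using hx))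
    have hNe : starIdeal' N (hlmax N hNmax) ≠ ⊤ := by
      intro h
      apply hNmax.ne_top
      rw [Ideal.eq_top_iff_one]
      have h1 : (1 : R) ∈ starIdeal' N (hlmax N hNmax) := h ▸ Submodule.mem_top
      simpa [mem_starIdeal'] using h1
    have hMeq : M = starIdeal' N (hlmax N hNmax) := hM.eq_of_le hNe hMN
    have hNM : N ≤ starIdeal' M (hlmax M hM) := by
      intro x hx
      rw [mem_starIdeal']
      have h2 : star x ∈ starIdeal' N (hlmax N hNmax) := by
        rw [mem_starIdeal']; simpa using hx
      rw [← hMeq] at h2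
      exact h2
    exact absurd (hJN.trans hNM) (not_le_of_gt hJ)

end Aux

/-- An l-maximal ring with involution having a unique stable maximal
ideal 𝔰 has at most two maximal ideals 𝔪 and 𝔪*, and 𝔰 = 𝔪 ∩ 𝔪*. -/
theorem stmt2 (R : Type*) [Ring R] [StarRing R]
    (hlmax : ∀ I : Ideal R, I.IsMaximal → ∀ x ∈ I, ∀ r : R, x * r ∈ I)
    (𝔰 : Ideal R) (hs_ne : 𝔰 ≠ ⊤)
    (hs_stable : ∀ x : R, x ∈ 𝔰 ↔ star x ∈ 𝔰)
    (hs_max : ∀ J : Ideal R, J ≠ ⊤ → (∀ x : R, x ∈ J ↔ star x ∈ J) → 𝔰 ≤ J → J = 𝔰)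
    (hs_unique : ∀ J : Ideal R, J ≠ ⊤ → (∀ x : R, x ∈ J ↔ star x ∈ J) →
      (∀ K : Ideal R, K ≠ ⊤ → (∀ x : R, x ∈ K ↔ star x ∈ K) → J ≤ K → K = J) → J = 𝔰) :
    ∃ 𝔪 : Ideal R, 𝔪.IsMaximal ∧
      (∀ 𝔮 : Ideal R, 𝔮.IsMaximal → 𝔮 = 𝔪 ∨ ∀ x : R, x ∈ 𝔮 ↔ star x ∈ 𝔪) ∧
      (∀ x : R, x ∈ 𝔰 ↔ x ∈ 𝔪 ∧ star x ∈ 𝔪) := by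
  classical
  obtain ⟨𝔪, hm, hsm⟩ := Ideal.exists_le_maximal 𝔰 hs_ne
  have hM' : (starIdeal' 𝔪 (hlmax 𝔪 hm)).IsMaximal := starIdeal'_isMaximal hlmax 𝔪 hm
  -- properness of intersections Q ⊓ Q*
  have inter_ne_top : ∀ (Q : Ideal R) (hQ : Q.IsMaximal),
      Q ⊓ starIdeal' Q (hlmax Q hQ) ≠ ⊤ := by
    intro Q hQ h
    apply hQ.ne_top
    rw [Ideal.eq_top_iff_one]
    have h1 : (1 : R) ∈ Q ⊓ starIdeal' Q (hlmax Q hQ) := h ▸ Submodule.mem_top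
    exact h1.1
  -- stability of intersections Q ⊓ Q*
  have inter_stable : ∀ (Q : Ideal R) (hQ : Q.IsMaximal),
      ∀ x : R, x ∈ Q ⊓ starIdeal' Q (hlmax Q hQ) ↔
        star x ∈ Q ⊓ starIdeal' Q (hlmax Q hQ) := by
    intro Q hQ x
    simp only [Submodule.mem_inf]
    constructor
    · rintro ⟨h1, h2⟩
      refine ⟨h2, ?_⟩
      show star (star x) ∈ Q
      simpa using h1
    · rintro ⟨h1, h2⟩
      have h2' : star (star x) ∈ Q := h2
      simp only [star_star] at h2'
      exact ⟨h2', h1⟩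
  -- Q ⊓ Q* is maximal among stable ideals, hence equals 𝔰
  have inter_eq_s : ∀ (Q : Ideal R) (hQ : Q.IsMaximal),
      Q ⊓ starIdeal' Q (hlmax Q hQ) = 𝔰 := by
    intro Q hQ
    apply hs_unique _ (inter_ne_top Q hQ) (inter_stable Q hQ)
    intro K hKne hKst hTK
    obtain ⟨N, hNmax, hKN⟩ := Ideal.exists_le_maximal K hKne
    have hprod : ∀ a ∈ Q, ∀ b ∈ starIdeal' Q (hlmax Q hQ), a * b ∈ N := by
      intro a ha b hb
      exact hKN (hTK (Submodule.mem_inf.mpr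
        ⟨hlmax Q hQ a ha b, (starIdeal' Q (hlmax Q hQ)).smul_mem a hb⟩))
    rcases key_prime hlmax N hNmax Q (starIdeal' Q (hlmax Q hQ)) hprod with hQN | hQN
    · have hQeq : Q = N := hQ.eq_of_le hNmax.ne_top hQN
      apply le_antisymm _ hTK
      intro x hx
      refine Submodule.mem_inf.mpr ⟨by rw [hQeq]; exact hKN hx, ?_⟩
      show star x ∈ Q
      rw [hQeq]
      exact hKN ((hKst x).mp hx)
    · have hQeq : starIdeal' Q (hlmax Q hQ) = N :=
        (starIdeal'_isMaximal hlmax Q hQ).eq_of_le hNmax.ne_top hQN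
      apply le_antisymm _ hTK
      intro x hx
      have h1 : x ∈ starIdeal' Q (hlmax Q hQ) := by rw [hQeq]; exact hKN hx
      have h2 : star x ∈ starIdeal' Q (hlmax Q hQ) := by
        rw [hQeq]; exact hKN ((hKst x).mp hx)
      have h2' : star (star x) ∈ Q := h2
      simp only [star_star] at h2'
      exact Submodule.mem_inf.mpr ⟨h2', h1⟩
  refine ⟨𝔪, hm, ?_, ?_⟩
  · intro 𝔮 hq
    have hprod : ∀ a ∈ 𝔪, ∀ b ∈ starIdeal' 𝔪 (hlmax 𝔪 hm), a * b ∈ 𝔮 := by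
      intro a ha b hb
      have hab : a * b ∈ 𝔪 ⊓ starIdeal' 𝔪 (hlmax 𝔪 hm) :=
        Submodule.mem_inf.mpr ⟨hlmax 𝔪 hm a ha b, (starIdeal' 𝔪 (hlmax 𝔪 hm)).smul_mem a hb⟩
      rw [inter_eq_s 𝔪 hm, ← inter_eq_s 𝔮 hq] at hab
      exact (Submodule.mem_inf.mp hab).1
    rcases key_prime hlmax 𝔮 hq 𝔪 (starIdeal' 𝔪 (hlmax 𝔪 hm)) hprod with hle | hle
    · exact Or.inl (hm.eq_of_le hq.ne_top hle).symm
    · right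
      intro x
      rw [← mem_starIdeal' (hI := hlmax 𝔪 hm)]
      rw [hM'.eq_of_le hq.ne_top hle]
  · intro x
    constructor
    · intro hx
      have h1 : x ∈ 𝔪 ⊓ starIdeal' 𝔪 (hlmax 𝔪 hm) := by
        rw [inter_eq_s 𝔪 hm]; exact hx
      exact Submodule.mem_inf.mp h1
    · intro ⟨h1, h2⟩
      have h3 : x ∈ 𝔪 ⊓ starIdeal' 𝔪 (hlmax 𝔪 hm) := Submodule.mem_inf.mpr ⟨h1, h2⟩
      rwa [inter_eq_s 𝔪 hm] at h3
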